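/- For any integer k, positive integer d, and n \ge 0: B_n^{(k)}(x) = \sum_{j=0}^{n} \sum_{i=0}^{d-1} \sum_{l=1}^{n-j+1} \binom{n}{j} d^{j-1} B_j((x+i)/d) \cdot S_1(n-j+1, l) / ((n-j+1) l^{k-1}). -/

import Mathlib

noncomputable section

/-- Signed Stirling numbers of the first kind. -/
def stirling1 : ℕ → ℕ → ℤ
  | 0, 0 => 1
  | 0, _ + 1 => 0
  | _ + 1, 0 => 0
  | n + 1, m + 1 => stirling1 n m - n * stirling1 n (m + 1)

/-- `n!`-normalized coefficients of `Ei_k (log (1+t))`. -/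
def polyExpCoeff (k : ℤ) (n : ℕ) : ℚ :=
  ∑ m ∈ Finset.Icc 1 n, (stirling1 n m : ℚ) / (m : ℚ) ^ (k - 1)

/-- Type 2 poly-Bernoulli numbers of index `k`, defined by the recursion coming from the
generating function `Ei_k (log (1+t)) / (e^t - 1) = ∑ B_n^{(k)} t^n/n!`. -/
def polyBernoulli (k : ℤ) : ℕ → ℚ
  | n =>
    (polyExpCoeff k (n + 1) -
      ∑ l ∈ (Finset.range n).attach, ((n + 1).choose l.1 : ℚ) * polyBernoulli k l.1) / (n + 1)
  termination_by n => n
  decreasing_by exact Finset.mem_range.mp l.2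

/-- Type 2 poly-Bernoulli polynomials of index `k`, as functions on `ℝ`. -/
def polyBernoulliPoly (k : ℤ) (n : ℕ) (x : ℝ) : ℝ :=
  ∑ l ∈ Finset.range (n + 1), (n.choose l : ℝ) * (polyBernoulli k l : ℝ) * x ^ (n - l)

/-- Bernoulli polynomials as functions on `ℝ`. -/
def bernoulliPolyFun (n : ℕ) (x : ℝ) : ℝ :=
  ∑ l ∈ Finset.range (n + 1), (n.choose l : ℝ) * (bernoulli l : ℝ) * x ^ (n - l)

/-- Bernoulli functions `B̄_n(x) = B_n(⟨x⟩)`. -/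
def bernoulliBar (n : ℕ) (x : ℝ) : ℝ := bernoulliPolyFun n (Int.fract x)

/-- Type 2 poly-Bernoulli functions `B̄_n^{(k)}(x) = B_n^{(k)}(⟨x⟩)`. -/
def polyBernoulliBar (k : ℤ) (n : ℕ) (x : ℝ) : ℝ := polyBernoulliPoly k n (Int.fract x)

/-- Poly-Dedekind sums `S_p^{(k)}(h,m)`. -/
def polyDedekindSum (k : ℤ) (p h m : ℕ) : ℝ :=
  ∑ μ ∈ Finset.Ico 1 m, (μ / m : ℝ) * polyBernoulliBar k p (h * μ / m)

/-- Apostol's generalized Dedekind sums `S_p(h,m)`. -/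
def genDedekindSum (p h m : ℕ) : ℝ :=
  ∑ μ ∈ Finset.Ico 1 m, (μ / m : ℝ) * bernoulliBar p (h * μ / m)

/-- The polyexponential function `Ei_k`. -/
def polyExp (k : ℤ) (x : ℝ) : ℝ :=
  ∑' n : ℕ, x ^ (n + 1) / ((n + 1 : ℝ) ^ k * (Nat.factorial n : ℝ))

/-- The sawtooth function `((x))`. -/
def sawtooth (x : ℝ) : ℝ := if Int.fract x = 0 then 0 else Int.fract x - 1 / 2

end
section MyAux

section Aux

theorem tri2 {M : Type*} [AddCommMonoid M] (N : ℕ) (f : ℕ → ℕ → M) :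
    ∑ k ∈ Finset.range N, ∑ l ∈ Finset.range (k+1), f k l
      = ∑ m ∈ Finset.range N, ∑ j ∈ Finset.range (N - m), f (j+m) j := by
  rw [Finset.sum_sigma', Finset.sum_sigma']
  apply Finset.sum_nbij' (fun p => ⟨p.1 - p.2, p.2⟩) (fun p => ⟨p.2 + p.1, p.2⟩) <;>
    intro p hp <;>
    simp only [Finset.mem_sigma, Finset.mem_range] at * <;>
    try omega
  · obtain ⟨h1, h2⟩ := hp
    congr 1 <;> omega
  · obtain ⟨h1, h2⟩ := hp
    congr 1
    omega
  · obtain ⟨h1, h2⟩ := hp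
    congr 1
    omega

theorem tri2' {M : Type*} [AddCommMonoid M] (N : ℕ) (f : ℕ → ℕ → M) :
    ∑ a ∈ Finset.range N, ∑ b ∈ Finset.range (N - a), f a b
      = ∑ b ∈ Finset.range N, ∑ a ∈ Finset.range (N - b), f a b := by
  rw [Finset.sum_sigma', Finset.sum_sigma']
  apply Finset.sum_nbij' (fun p => ⟨p.2, p.1⟩) (fun p => ⟨p.2, p.1⟩) <;>
    intro p hp <;>
    simp only [Finset.mem_sigma, Finset.mem_range] at * <;> try omega
  all_goals rfl

theorem choose_idQ {n m j : ℕ} (h : j + m ≤ n) :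
    (n.choose (j+m) : ℚ) * ((j+m).choose j) = (n.choose m) * ((n-m).choose j) := by
  rw [Nat.choose_symm_add]
  rw_mod_cast [Nat.choose_mul (Nat.le_add_left m j)]
  congr 3
  omega

noncomputable def pc (k : ℤ) (m : ℕ) : ℚ := polyExpCoeff k (m+1) / (m+1)

noncomputable def pD (k : ℤ) (n : ℕ) : ℚ :=
  ∑ j ∈ Finset.range (n+1), (n.choose j : ℚ) * bernoulli j * pc k (n-j)

theorem sum_pD (k : ℤ) (n : ℕ) :
    ∑ l ∈ Finset.range (n+1), ((n+1).choose l : ℚ) * pD k l = polyExpCoeff k (n+1) := by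
  simp only [pD, Finset.mul_sum, ← mul_assoc]
  rw [tri2 (n+1) (fun l j => ((n+1).choose l : ℚ) * (l.choose j) * bernoulli j * pc k (l-j))]
  have : ∀ m ∈ Finset.range (n+1), ∑ j ∈ Finset.range (n+1-m),
      ((n+1).choose (j+m) : ℚ) * ((j+m).choose j) * bernoulli j * pc k (j+m-j)
      = (if m = n then ((n+1) : ℚ) * pc k n else 0) := by
    intro m hm
    simp only [Nat.add_sub_cancel_left]
    have hcongr : ∀ j ∈ Finset.range (n+1-m),
        ((n+1).choose (j+m) : ℚ) * ((j+m).choose j) * bernoulli j * pc k m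
        = ((n+1).choose m : ℚ) * pc k m * (((n+1-m).choose j : ℚ) * bernoulli j) := by
      intro j hj
      rw [Finset.mem_range] at hj
      rw [choose_idQ (by omega)]
      ring
    rw [Finset.sum_congr rfl hcongr, ← Finset.mul_sum, sum_bernoulli]
    rw [Finset.mem_range] at hm
    by_cases h : m = n
    · subst h
      have h1 : m+1-m = 1 := by omega
      rw [h1]
      simp [Nat.choose_succ_self_right]
    · have : ¬ (n+1-m = 1) := by omega
      simp [h, this]
  rw [Finset.sum_congr rfl this, Finset.sum_ite_eq' (Finset.range (n+1)) n]
  simp [pc]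
  field_simp

theorem polyBernoulli_eq_pD (k : ℤ) (n : ℕ) : polyBernoulli k n = pD k n := by
  induction n using Nat.strong_induction_on with
  | _ n ih =>
    rw [polyBernoulli]
    have h1 : ∑ l ∈ (Finset.range n).attach, ((n + 1).choose l.1 : ℚ) * polyBernoulli k l.1
        = ∑ l ∈ Finset.range n, ((n + 1).choose l : ℚ) * pD k l := by
      rw [← Finset.sum_attach (Finset.range n) (fun l => ((n+1).choose l : ℚ) * pD k l)]
      exact Finset.sum_congr rfl fun l _ => by rw [ih l.1 (Finset.mem_range.mp l.2)]
    rw [h1]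
    have h2 := sum_pD k n
    rw [Finset.sum_range_succ, Nat.choose_succ_self_right] at h2
    have h3 : ((n:ℚ)+1) ≠ 0 := by positivity
    field_simp
    push_cast at h2 ⊢
    linarith

theorem polyBernoulliPoly_eq (k : ℤ) (n : ℕ) (x : ℝ) :
    polyBernoulliPoly k n x
      = ∑ m ∈ Finset.range (n+1), (n.choose m : ℝ) * ((pc k m : ℚ) : ℝ) * bernoulliPolyFun (n-m) x := by
  unfold polyBernoulliPoly bernoulliPolyFun
  simp only [polyBernoulli_eq_pD, pD, Rat.cast_sum, Rat.cast_mul, Rat.cast_natCast]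
  simp only [Finset.sum_mul, Finset.mul_sum]
  rw [tri2 (n+1) (fun l j => (n.choose l : ℝ) *
      ((l.choose j : ℝ) * ((bernoulli j : ℚ) : ℝ) * ((pc k (l-j) : ℚ) : ℝ)) * x ^ (n - l))]
  apply Finset.sum_congr rfl
  intro m hm
  rw [Finset.mem_range] at hm
  have h1 : n - m + 1 = n + 1 - m := by omega
  rw [h1]
  apply Finset.sum_congr rfl
  intro j hj
  rw [Finset.mem_range] at hj
  have h2 : j + m - j = m := by omega
  have h3 : n - (j + m) = n - m - j := by omega
  have h4 : (n.choose (j+m) : ℝ) * ((j+m).choose j : ℝ) = (n.choose m : ℝ) * ((n-m).choose j : ℝ) := by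
    exact_mod_cast congrArg (Rat.cast : ℚ → ℝ) (choose_idQ (n := n) (m := m) (j := j) (by omega))
  rw [h2, h3]
  push_cast
  linear_combination (((bernoulli j : ℚ) : ℝ) * ((pc k m : ℚ) : ℝ) * x ^ (n - m - j)) * h4

end Aux


theorem bernoulliPolyFun_eval (n : ℕ) (x : ℝ) :
    bernoulliPolyFun n x = Polynomial.eval x ((Polynomial.bernoulli n).map (algebraMap ℚ ℝ)) := by
  unfold bernoulliPolyFun
  rw [Polynomial.bernoulli, Polynomial.map_sum, Polynomial.eval_finset_sum]
  apply Finset.sum_congr rfl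
  intro i hi
  rw [Polynomial.map_monomial, Polynomial.eval_monomial]
  simp only [eq_ratCast]
  push_cast
  ring

theorem sum_bernoulliPolyFun (n : ℕ) (x : ℝ) :
    ∑ j ∈ Finset.range (n+1), ((n+1).choose j : ℝ) * bernoulliPolyFun j x = (n+1) * x^n := by
  have h := congrArg (fun p : Polynomial ℚ =>
      Polynomial.eval x (p.map (algebraMap ℚ ℝ))) (Polynomial.sum_bernoulli n)
  simp only [Polynomial.map_sum, Polynomial.eval_finset_sum, Polynomial.smul_eq_C_mul,
    Polynomial.map_mul, Polynomial.map_C, Polynomial.eval_mul, Polynomial.eval_C,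
    Polynomial.map_monomial, Polynomial.eval_monomial] at h
  simp only [eq_ratCast, Rat.cast_natCast, Rat.cast_add, Rat.cast_one] at h
  rw [← h]
  apply Finset.sum_congr rfl
  intro j hj
  rw [bernoulliPolyFun_eval]

theorem choose_idN' {n m j : ℕ} (h : j + m ≤ n) :
    n.choose (j+m) * ((j+m).choose j) = n.choose m * ((n-m).choose j) := by
  rw [Nat.choose_symm_add, Nat.choose_mul (Nat.le_add_left m j)]
  congr 2
  omega

theorem bernoulliPolyFun_add (N : ℕ) (x y : ℝ) :
    bernoulliPolyFun N (x + y)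
      = ∑ j ∈ Finset.range (N+1), (N.choose j : ℝ) * bernoulliPolyFun j x * y ^ (N - j) := by
  unfold bernoulliPolyFun
  simp only [Finset.sum_mul, Finset.mul_sum]
  rw [tri2 (N+1) (fun j l => (N.choose j : ℝ) *
      ((j.choose l : ℝ) * ((bernoulli l : ℚ) : ℝ) * x ^ (j - l)) * y ^ (N - j))]
  rw [tri2' (N+1)]
  apply Finset.sum_congr rfl
  intro l hl
  rw [Finset.mem_range] at hl
  rw [add_pow, Finset.mul_sum]
  have hM : N - l + 1 = N + 1 - l := by omega
  rw [hM]
  apply Finset.sum_congr rfl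
  intro r hr
  rw [Finset.mem_range] at hr
  have h4N : N.choose (l+r) * ((l+r).choose l) = N.choose l * ((N-l).choose r) := by
    have := Nat.choose_mul (n := N) (k := l+r) (s := l) (by omega)
    simpa using this
  have h4 : ((N.choose (l+r)) : ℝ) * ((l+r).choose l : ℝ) = (N.choose l : ℝ) * ((N-l).choose r : ℝ) := by
    exact_mod_cast congrArg (Nat.cast : ℕ → ℝ) h4N
  have h1 : l + r - l = r := by omega
  have h2 : N - (l + r) = N - l - r := by omega
  rw [h1, h2]
  linear_combination (-((bernoulli l : ℚ) : ℝ) * x ^ r * y ^ (N - l - r)) * h4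

theorem bernoulliPolyFun_one_step (n : ℕ) (z : ℝ) :
    bernoulliPolyFun (n+1) (z + 1) = bernoulliPolyFun (n+1) z + ((n:ℝ)+1) * z^n := by
  rw [bernoulliPolyFun_add (n+1) z 1]
  simp only [one_pow, mul_one]
  rw [Finset.sum_range_succ, Nat.choose_self, sum_bernoulliPolyFun]
  push_cast
  ring

theorem bernoulliPolyFun_tel (n d : ℕ) (x : ℝ) :
    bernoulliPolyFun (n+1) (x + d)
      = bernoulliPolyFun (n+1) x + ((n:ℝ)+1) * ∑ i ∈ Finset.range d, (x + i)^n := by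
  induction d with
  | zero => simp
  | succ d ihd =>
    have : x + ((d+1 : ℕ) : ℝ) = (x + d) + 1 := by push_cast; ring
    rw [this, bernoulliPolyFun_one_step, ihd, Finset.sum_range_succ]
    ring

theorem bernoulliPolyFun_key (n d : ℕ) (hd : 0 < d) (x : ℝ) :
    ∑ k ∈ Finset.range (n+1), ((n+1).choose k : ℝ) * ((d:ℝ)^((1:ℤ)-k) * bernoulliPolyFun k x)
      = ((n:ℝ)+1) * ∑ i ∈ Finset.range d, ((x+i)/d)^n := by
  have hdR : (d:ℝ) ≠ 0 := by positivity
  have hA := bernoulliPolyFun_add (n+1) x (d:ℝ)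
  rw [Finset.sum_range_succ, Nat.choose_self, Nat.cast_one, Nat.sub_self, pow_zero,
    bernoulliPolyFun_tel n d x] at hA
  -- hA : B_{n+1} x + (n+1) * ∑_i (x+i)^n = ∑_{j≤n} C(n+1,j) B_j x d^{n+1-j} + 1 * B_{n+1} x * 1
  have hB : ∑ j ∈ Finset.range (n+1), ((n+1).choose j : ℝ) * bernoulliPolyFun j x * (d:ℝ)^(n+1-j)
      = ((n:ℝ)+1) * ∑ i ∈ Finset.range d, (x + i)^n := by linarith
  have hstep : ∀ j ∈ Finset.range (n+1),
      ((n+1).choose j : ℝ) * ((d:ℝ)^((1:ℤ)-j) * bernoulliPolyFun j x)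
        = (((n+1).choose j : ℝ) * bernoulliPolyFun j x * (d:ℝ)^(n+1-j)) * (d:ℝ)^(-(n:ℤ)) := by
    intro j hj
    rw [Finset.mem_range] at hj
    have : (d:ℝ)^((1:ℤ)-j) = (d:ℝ)^(n+1-j) * (d:ℝ)^(-(n:ℤ)) := by
      rw [← zpow_natCast (d:ℝ) (n+1-j), ← zpow_add₀ hdR]
      congr 1
      omega
    rw [this]
    ring
  rw [Finset.sum_congr rfl hstep, ← Finset.sum_mul, hB]
  rw [Finset.mul_sum, Finset.mul_sum, Finset.sum_mul]
  apply Finset.sum_congr rfl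
  intro i _
  rw [div_pow, div_eq_mul_inv, ← zpow_natCast (d:ℝ) n, ← zpow_neg]
  ring

theorem bernoulliPolyFun_mult (d : ℕ) (hd : 0 < d) (j : ℕ) (x : ℝ) :
    ∑ i ∈ Finset.range d, bernoulliPolyFun j ((x + i)/d)
      = (d:ℝ)^((1:ℤ)-j) * bernoulliPolyFun j x := by
  induction j using Nat.strong_induction_on with
  | _ j ih =>
    have h1 : ∑ k ∈ Finset.range (j+1),
        ((j+1).choose k : ℝ) * (∑ i ∈ Finset.range d, bernoulliPolyFun k ((x+i)/d))
        = ((j:ℝ)+1) * ∑ i ∈ Finset.range d, ((x+i)/d)^j := by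
      simp only [Finset.mul_sum]
      rw [Finset.sum_comm]
      apply Finset.sum_congr rfl
      intro i _
      push_cast
      exact sum_bernoulliPolyFun j ((x+i)/d)
    have h2 := bernoulliPolyFun_key j d hd x
    have h3 : ∑ k ∈ Finset.range (j+1), ((j+1).choose k : ℝ) *
        ((∑ i ∈ Finset.range d, bernoulliPolyFun k ((x+i)/d)) - (d:ℝ)^((1:ℤ)-k) * bernoulliPolyFun k x)
        = 0 := by
      simp only [mul_sub, Finset.sum_sub_distrib]
      rw [h1, h2, sub_self]
    rw [Finset.sum_range_succ] at h3
    have h4 : ∑ k ∈ Finset.range j, ((j+1).choose k : ℝ) *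
        ((∑ i ∈ Finset.range d, bernoulliPolyFun k ((x+i)/d)) - (d:ℝ)^((1:ℤ)-k) * bernoulliPolyFun k x)
        = 0 := by
      apply Finset.sum_eq_zero
      intro k hk
      rw [ih k (Finset.mem_range.mp hk), sub_self, mul_zero]
    rw [h4, zero_add, Nat.choose_succ_self_right, mul_eq_zero] at h3
    rcases h3 with h | h
    · exfalso
      have : ((j:ℝ)+1) ≠ 0 := by positivity
      push_cast at h
      exact this h
    · linarith [h]

end MyAux

/-- Distribution-type formula for the type 2 poly-Bernoulli polynomials. -/
theorem polyBernoulliPoly_distribution (k : ℤ) (d : ℕ) (hd : 0 < d) (n : ℕ) (x : ℝ) :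
    polyBernoulliPoly k n x =
      ∑ j ∈ Finset.range (n + 1), ∑ i ∈ Finset.range d, ∑ l ∈ Finset.Icc 1 (n - j + 1),
        (n.choose j : ℝ) * (d : ℝ) ^ ((j : ℤ) - 1) * bernoulliPolyFun j ((x + i) / d) *
          (stirling1 (n - j + 1) l : ℝ) / (((n - j : ℕ) + 1) * (l : ℝ) ^ (k - 1)) := by
  have hdR : (d:ℝ) ≠ 0 := by positivity
  rw [polyBernoulliPoly_eq k n x,
    ← Finset.sum_range_reflect (fun m => (n.choose m : ℝ) * ((pc k m : ℚ) : ℝ) * bernoulliPolyFun (n-m) x) (n+1)]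
  apply Finset.sum_congr rfl
  intro j hj
  rw [Finset.mem_range] at hj
  have hj' : j ≤ n := by omega
  simp only [Nat.add_sub_cancel]
  have hsym : n - (n - j) = j := by omega
  have hchoose : n.choose (n-j) = n.choose j := Nat.choose_symm hj'
  rw [hsym, hchoose]
  -- now goal : C(n,j) * pcℝ(n-j) * B_j x = ∑_i ∑_l term
  set E : ℝ := ((polyExpCoeff k (n-j+1) : ℚ) : ℝ) with hEdef
  have hE : E = ∑ l ∈ Finset.Icc 1 (n-j+1), (stirling1 (n-j+1) l : ℝ) / (l:ℝ)^(k-1) := by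
    rw [hEdef, polyExpCoeff]
    push_cast
    rfl
  have hc' : (((n - j : ℕ) : ℝ) + 1) ≠ 0 := by positivity
  have hinner : ∀ i ∈ Finset.range d,
      (∑ l ∈ Finset.Icc 1 (n - j + 1),
        (n.choose j : ℝ) * (d : ℝ) ^ ((j : ℤ) - 1) * bernoulliPolyFun j ((x + i) / d) *
          (stirling1 (n - j + 1) l : ℝ) / (((n - j : ℕ) + 1) * (l : ℝ) ^ (k - 1)))
      = (n.choose j : ℝ) * ((pc k (n-j) : ℚ) : ℝ) * ((d : ℝ) ^ ((j:ℤ) - 1) * bernoulliPolyFun j ((x + i) / d)) := by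
    intro i _
    have hterm : ∀ l ∈ Finset.Icc 1 (n - j + 1),
        (n.choose j : ℝ) * (d : ℝ) ^ ((j : ℤ) - 1) * bernoulliPolyFun j ((x + i) / d) *
          (stirling1 (n - j + 1) l : ℝ) / (((n - j : ℕ) + 1) * (l : ℝ) ^ (k - 1))
        = ((n.choose j : ℝ) * (d : ℝ) ^ ((j : ℤ) - 1) * bernoulliPolyFun j ((x + i) / d) / (((n - j : ℕ) : ℝ) + 1))
            * ((stirling1 (n - j + 1) l : ℝ) / (l : ℝ) ^ (k - 1)) := by
      intro l _
      field_simp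
    rw [Finset.sum_congr rfl hterm, ← Finset.mul_sum, ← hE]
    have hpc : ((pc k (n-j) : ℚ) : ℝ) = E / (((n - j : ℕ) : ℝ) + 1) := by
      rw [pc, hEdef]
      push_cast
      ring
    rw [hpc]
    field_simp
  rw [Finset.sum_congr rfl hinner, ← Finset.mul_sum, Finset.mul_sum]
  have : ∑ i ∈ Finset.range d, (d : ℝ) ^ ((j:ℤ) - 1) * bernoulliPolyFun j ((x + i) / d)
      = bernoulliPolyFun j x := by
    rw [← Finset.mul_sum, bernoulliPolyFun_mult d hd j x, ← mul_assoc, ← zpow_add₀ hdR]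
    norm_num
  rw [← Finset.mul_sum, this]
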